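/- Correctness of the CYK algebra step: fix a context-free grammar in Chomsky normal form with non-terminals V and terminals Σ. For w ∈ Σ⁺, let A_u = {P ∈ V | P ⇒⁺ u} for each u ∈ Σ⁺, and let p be a function assigning to each decomposition w = u·v (u,v ∈ Σ⁺) the pair (A_u, A_v). Define a_w(p) = {P | ∃σ ∈ Σ, w = σ and P → σ is a rule} ∪ {P | ∃ rule P → QT and decomposition w = u·v with Q ∈ A_u and T ∈ A_v}. Then a_w(p) = {P ∈ V | P ⇒⁺ w}. -/
import Mathlib


/-- Derivability `P ⇒⁺ w` of a non-empty word `w` from a non-terminal `P` in a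
context-free grammar in Chomsky normal form, given by its binary rules
`bin P Q T` (for `P → QT`) and unary rules `un P σ` (for `P → σ`). -/
inductive Derives {V S : Type*} (bin : V → V → V → Prop) (un : V → S → Prop) :
    V → List S → Prop
  | unary {P : V} {σ : S} : un P σ → Derives bin un P [σ]
  | binary {P Q T : V} {u v : List S} :
      bin P Q T → u ≠ [] → v ≠ [] →
      Derives bin un Q u → Derives bin un T v → Derives bin un P (u ++ v)

/-- Correctness of the CYK algebra step: for a non-empty word `w`,
the set
`a_w(p) = {P | ∃σ, w = σ, P → σ} ∪ {P | ∃ rule P → QT, ∃ w = u·v with Q ⇒⁺ u, T ⇒⁺ v}`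
(where `p` assigns to each decomposition `w = u·v` the pair `(A_u, A_v)` of sets of
non-terminals deriving `u` resp. `v`) equals `{P ∈ V | P ⇒⁺ w}`. -/
theorem stmt_17 {V S : Type*} (bin : V → V → V → Prop) (un : V → S → Prop)
    (w : List S) (hw : w ≠ []) (P : V) :
    ((∃ σ : S, w = [σ] ∧ un P σ) ∨
      (∃ (Q T : V) (u v : List S), bin P Q T ∧ u ≠ [] ∧ v ≠ [] ∧ w = u ++ v ∧
        Derives bin un Q u ∧ Derives bin un T v))
    ↔ Derives bin un P w := by
  constructor
  · rintro (⟨σ, rfl, h⟩ | ⟨Q, T, u, v, hb, hu, hv, rfl, hQ, hT⟩)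
    · exact Derives.unary h
    · exact Derives.binary hb hu hv hQ hT
  · rintro (h | @⟨_, Q, T, u, v, hb, hu, hv, hQ, hT⟩)
    · exact Or.inl ⟨_, rfl, h⟩
    · exact Or.inr ⟨Q, T, u, v, hb, hu, hv, rfl, hQ, hT⟩
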